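/- Let k be a nonnegative integer and n a positive integer. Define u : (0, π/2) → ℝ by u(x) = ∑_{ℓ=0}^{n} (−1)^ℓ · binom(n,ℓ) · (∏_{i=0}^{ℓ−1} (n+k+i)) / (∏_{i=0}^{ℓ−1} (k+1+i)) · cos(x)^{k+2ℓ}. Then for every x ∈ (0, π/2) one has u''(x) − u'(x)/(sin x · cos x) − k²·tan²(x)·u(x) = −4n(n+k)·u(x), and moreover ∫₀^{π/2} u(x)²/tan(x) dx < ∞. -/

import Mathlib

open Real MeasureTheory Finset

private lemma pascal_sum (n : ℕ) (f : ℕ → ℝ) :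
    ∑ l ∈ range (n+2), (-1:ℝ)^l * ((n+1).choose l) * f l
      = ∑ l ∈ range (n+1), (-1:ℝ)^l * (n.choose l) * (f l - f (l+1)) := by
  have h2 : ∑ l ∈ range (n+1), (-1:ℝ)^l * (n.choose (l+1)) * f (l+1)
      = f 0 - ∑ l ∈ range (n+1), (-1:ℝ)^l * (n.choose l) * f l := by
    have := Finset.sum_range_succ' (fun l => (-1:ℝ)^l * (n.choose l) * f l) (n+1)
    rw [Finset.sum_range_succ (fun l => (-1:ℝ)^l * (n.choose l) * f l) (n+1)] at this
    simp only [Nat.choose_succ_self, Nat.cast_zero, mul_zero, zero_mul, add_zero,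
      pow_zero, Nat.choose_zero_right, Nat.cast_one, mul_one, one_mul] at this
    have h3 : ∀ l, (-1:ℝ)^(l+1) * (n.choose (l+1)) * f (l+1)
        = -((-1:ℝ)^l * (n.choose (l+1)) * f (l+1)) := by intro l; ring
    simp only [h3] at this
    rw [Finset.sum_neg_distrib] at this
    linarith [this]
  rw [Finset.sum_range_succ' (fun l => (-1:ℝ)^l * ((n+1).choose l) * f l) (n+1)]
  simp only [Nat.choose_succ_succ, Nat.cast_add, pow_zero, Nat.choose_zero_right,
    Nat.cast_one, one_mul]
  have h4 : ∀ l ∈ range (n+1), (-1:ℝ)^(l+1) * ((n.choose l : ℝ) + (n.choose (l+1) : ℝ)) * f (l+1)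
      = -((-1:ℝ)^l * (n.choose l) * f (l+1)) + -((-1:ℝ)^l * (n.choose (l+1)) * f (l+1)) := by
    intro l _; ring
  rw [Finset.sum_congr rfl h4, Finset.sum_add_distrib, Finset.sum_neg_distrib,
    Finset.sum_neg_distrib, h2]
  have h5 : ∀ l ∈ range (n+1), (-1:ℝ)^l * (n.choose l) * (f l - f (l+1))
      = (-1:ℝ)^l * (n.choose l) * f l - (-1:ℝ)^l * (n.choose l) * f (l+1) := by
    intro l _; ring
  rw [Finset.sum_congr rfl h5, Finset.sum_sub_distrib]
  ring

private lemma alt_sum_prod : ∀ n : ℕ, ∀ m : ℕ, m < n → ∀ x : ℝ,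
    ∑ l ∈ Finset.range (n+1), (-1:ℝ)^l * (n.choose l) * ∏ i ∈ Finset.range m, (x + l + i) = 0 := by
  intro n
  induction n with
  | zero => intro m hm; omega
  | succ n ih =>
    intro m hm x
    have key := pascal_sum n (fun l => ∏ i ∈ Finset.range m, (x + l + i))
    rw [show n + 1 + 1 = n + 2 from rfl, key]
    rcases m with _ | m'
    · simp
    · -- difference identity
      have hd : ∀ l : ℕ, (∏ i ∈ Finset.range (m'+1), (x + l + i))
          - (∏ i ∈ Finset.range (m'+1), (x + (l+1) + i))
          = -(m'+1 : ℝ) * ∏ i ∈ Finset.range m', ((x+1) + l + i) := by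
        intro l
        rw [Finset.prod_range_succ' (fun i => (x + l + i)) m',
            Finset.prod_range_succ (fun i => (x + (l+1) + i)) m']
        have e1 : ∀ i ∈ Finset.range m', (x + (l:ℝ) + (i+1 : ℕ)) = ((x+1) + l + i) := by
          intro i _; push_cast; ring
        have e2 : ∀ i ∈ Finset.range m', (x + ((l:ℝ)+1) + i) = ((x+1) + l + i) := by
          intro i _; push_cast; ring
        rw [Finset.prod_congr rfl e1, Finset.prod_congr rfl e2]
        push_cast
        ring
      calc ∑ l ∈ range (n+1), (-1:ℝ)^l * (n.choose l) *
              ((∏ i ∈ Finset.range (m'+1), (x + l + i)) - ∏ i ∈ Finset.range (m'+1), (x + (l+1:ℕ) + i))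
          = ∑ l ∈ range (n+1), -(m'+1:ℝ) * ((-1:ℝ)^l * (n.choose l) * ∏ i ∈ Finset.range m', ((x+1) + l + i)) := by
            apply Finset.sum_congr rfl
            intro l _
            push_cast
            rw [hd l]
            ring
        _ = -(m'+1:ℝ) * ∑ l ∈ range (n+1), ((-1:ℝ)^l * (n.choose l) * ∏ i ∈ Finset.range m', ((x+1) + l + i)) := by
            rw [Finset.mul_sum]
        _ = 0 := by rw [ih m' (by omega) (x+1)]; ring

private lemma Bpos (k : ℕ) (l : ℕ) : 0 < ∏ i ∈ Finset.range l, ((k : ℝ) + 1 + i) := by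
  apply Finset.prod_pos
  intro i _
  positivity

private lemma sum_c_eq_zero (k n : ℕ) (hn : 0 < n) :
    ∑ l ∈ Finset.range (n+1), (-1:ℝ)^l * (n.choose l) *
      (∏ i ∈ Finset.range l, ((n : ℝ) + k + i)) / (∏ i ∈ Finset.range l, ((k : ℝ) + 1 + i)) = 0 := by
  obtain ⟨n', rfl⟩ : ∃ m, n = m + 1 := ⟨n - 1, (Nat.succ_pred_eq_of_pos hn).symm⟩
  set g : ℕ → ℝ := fun i => (k : ℝ) + 1 + i with hg
  set D : ℝ := ∏ i ∈ Finset.range n', g i with hD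
  have hDpos : 0 < D := Finset.prod_pos (fun i _ => by simp only [hg]; positivity)
  have key : ∀ l, (∏ i ∈ Finset.range l, (((n'+1 : ℕ) : ℝ) + k + i)) * D
      = (∏ i ∈ Finset.range l, ((k : ℝ) + 1 + i)) * ∏ i ∈ Finset.range n', g (l + i) := by
    intro l
    have e1 : ∏ i ∈ Finset.range l, (((n'+1 : ℕ) : ℝ) + k + i) = ∏ i ∈ Finset.range l, g (n' + i) := by
      apply Finset.prod_congr rfl
      intro i _
      simp only [hg]
      push_cast
      ring
    have e2 : ∏ i ∈ Finset.range l, ((k : ℝ) + 1 + i) = ∏ i ∈ Finset.range l, g i := by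
      apply Finset.prod_congr rfl; intro i _; simp [hg]
    rw [e1, e2, mul_comm, ← Finset.prod_range_add g n' l, ← Finset.prod_range_add g l n',
      Nat.add_comm n' l]
  have frac : ∀ l, (∏ i ∈ Finset.range l, (((n'+1 : ℕ) : ℝ) + k + i))
      / (∏ i ∈ Finset.range l, ((k : ℝ) + 1 + i))
      = (∏ i ∈ Finset.range n', g (l + i)) / D := by
    intro l
    rw [div_eq_div_iff (ne_of_gt (Bpos k l)) (ne_of_gt hDpos)]
    rw [key l]
    ring
  have main : ∑ l ∈ Finset.range (n'+1+1), (-1:ℝ)^l * ((n'+1).choose l) *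
      ∏ i ∈ Finset.range n', (((k:ℝ)+1) + l + i) = 0 :=
    alt_sum_prod (n'+1) n' (by omega) ((k:ℝ)+1)
  calc ∑ l ∈ Finset.range (n'+1+1), (-1:ℝ)^l * ((n'+1).choose l) *
          (∏ i ∈ Finset.range l, (((n'+1:ℕ) : ℝ) + k + i)) / (∏ i ∈ Finset.range l, ((k : ℝ) + 1 + i))
      = ∑ l ∈ Finset.range (n'+1+1), ((-1:ℝ)^l * ((n'+1).choose l) *
          ∏ i ∈ Finset.range n', (((k:ℝ)+1) + l + i)) / D := by
        apply Finset.sum_congr rfl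
        intro l _
        rw [mul_div_assoc, frac l, mul_div_assoc]
        congr 1
        congr 1
        apply Finset.prod_congr rfl
        intro i _
        simp only [hg]
        push_cast
        ring
    _ = (∑ l ∈ Finset.range (n'+1+1), (-1:ℝ)^l * ((n'+1).choose l) *
          ∏ i ∈ Finset.range n', (((k:ℝ)+1) + l + i)) / D := by rw [Finset.sum_div]
    _ = 0 := by rw [main, zero_div]

private lemma cc_rec (k n j : ℕ) (hj : j < n) :
    ((-1:ℝ)^(j+1) * (n.choose (j+1)) * (∏ i ∈ Finset.range (j+1), ((n : ℝ) + k + i))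
        / (∏ i ∈ Finset.range (j+1), ((k : ℝ) + 1 + i))) * ((j+1:ℝ) * ((j:ℝ)+1+k))
      = ((j:ℝ)*((j:ℝ)+k) - (n:ℝ)*((n:ℝ)+k)) *
        ((-1:ℝ)^j * (n.choose j) * (∏ i ∈ Finset.range j, ((n : ℝ) + k + i))
        / (∏ i ∈ Finset.range j, ((k : ℝ) + 1 + i))) := by
  have hch : ((n.choose (j+1) : ℝ)) * ((j:ℝ)+1) = (n.choose j : ℝ) * ((n:ℝ) - (j:ℝ)) := by
    have := Nat.choose_succ_right_eq n j
    have h2 : ((n.choose (j+1) * (j+1) : ℕ) : ℝ) = ((n.choose j * (n - j) : ℕ) : ℝ) := by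
      exact_mod_cast congrArg (Nat.cast (R := ℝ)) this
    push_cast [Nat.cast_sub hj.le] at h2
    linarith [h2]
  rw [Finset.prod_range_succ, Finset.prod_range_succ]
  have hb := (Bpos k j).ne'
  have hkj : ((k:ℝ)+1+(j:ℕ)) ≠ 0 := by positivity
  rw [div_mul_eq_mul_div, mul_div_assoc']
  rw [div_eq_div_iff (mul_ne_zero hb hkj) hb]
  linear_combination ((-1:ℝ)^(j+1) * (∏ i ∈ Finset.range j, ((n : ℝ) + k + i))
    * ((n:ℝ)+(k:ℝ)+(j:ℝ)) * ((j:ℝ)+1+(k:ℝ)) * (∏ i ∈ Finset.range j, ((k : ℝ) + 1 + i))) * hch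


private lemma term_general (s t c : ℝ) (hs : s ≠ 0) (ht : t ≠ 0) (hst : s^2+t^2 = 1) (k e : ℕ) :
    (c * ((e+2 : ℕ) : ℝ)) * ((((e+1 : ℕ) : ℝ) * t^e * (-s)) * (-s) + t^(e+1) * (-t))
      - ((c * ((e+2 : ℕ) : ℝ)) * (t^(e+1) * (-s)))/(s*t)
      - (k:ℝ)^2 * (s/t)^2 * (c * t^(e+2))
    = c * (((e+2:ℕ):ℝ)^2 - (k:ℝ)^2) * (t^e - t^(e+2)) := by
  have hdiv : ((c * ((e+2 : ℕ) : ℝ)) * (t^(e+1) * (-s)))/(s*t) = -(c * ((e+2:ℕ):ℝ) * t^e) := by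
    rw [pow_succ]; field_simp
  rw [hdiv]
  have h2 : (s/t)^2 = (1 - t^2)/t^2 := by rw [div_pow]; congr 1; linarith
  rw [h2]
  have hss : (-s) * (-s) = 1 - t^2 := by nlinarith [hst]
  rw [show (((e+1:ℕ):ℝ) * t^e * (-s)) * (-s) = ((e+1:ℕ):ℝ) * t^e * ((-s)*(-s)) from by ring, hss]
  rw [pow_succ, pow_succ, pow_succ]
  field_simp
  push_cast
  ring

private lemma term_lemma (s t c : ℝ) (hs : s ≠ 0) (ht : t ≠ 0) (hst : s^2+t^2 = 1) (k l : ℕ) :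
    (c * ((k+2*l : ℕ) : ℝ)) * ((((k+2*l-1 : ℕ) : ℝ) * t^(k+2*l-1-1) * (-s)) * (-s)
        + t^(k+2*l-1) * (-t))
      - ((c * ((k+2*l : ℕ) : ℝ)) * (t^(k+2*l-1) * (-s)))/(s*t)
      - (k:ℝ)^2 * (s/t)^2 * (c * t^(k+2*l))
    = c * (4*(l:ℝ)*((l:ℝ)+(k:ℝ))) * (t^(k+2*l-1-1) - t^(k+2*l)) := by
  rcases l with _ | j
  · -- l = 0
    rcases k with _ | _ | K
    · norm_num
    · norm_num
      field_simp
      linear_combination (-c) * hst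
    · -- k = K + 2
      have e1 : K+2+2*0 = K+2 := by omega
      have e2 : K+2+2*0-1 = K+1 := by omega
      have e3 : K+2+2*0-1-1 = K := by omega
      rw [e3, e2, e1]
      calc (c * ((K+2 : ℕ) : ℝ)) * ((((K+1 : ℕ) : ℝ) * t^K * (-s)) * (-s) + t^(K+1) * (-t))
            - ((c * ((K+2 : ℕ) : ℝ)) * (t^(K+1) * (-s)))/(s*t)
            - ((K+2:ℕ):ℝ)^2 * (s/t)^2 * (c * t^(K+2))
          = c * (((K+2:ℕ):ℝ)^2 - ((K+2:ℕ):ℝ)^2) * (t^K - t^(K+2)) :=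
            term_general s t c hs ht hst (K+2) K
        _ = c * (4*((0:ℕ):ℝ)*(((0:ℕ):ℝ)+((K+2:ℕ):ℝ))) * (t^K - t^(K+2)) := by push_cast; ring
  · -- l = j + 1
    have e1 : k+2*(j+1) = (k+2*j)+2 := by omega
    have e2 : k+2*(j+1)-1 = (k+2*j)+1 := by omega
    have e3 : k+2*(j+1)-1-1 = k+2*j := by omega
    rw [e3, e2, e1]
    calc (c * (((k+2*j)+2 : ℕ) : ℝ)) * (((((k+2*j)+1 : ℕ) : ℝ) * t^(k+2*j) * (-s)) * (-s)
            + t^((k+2*j)+1) * (-t))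
          - ((c * (((k+2*j)+2 : ℕ) : ℝ)) * (t^((k+2*j)+1) * (-s)))/(s*t)
          - (k:ℝ)^2 * (s/t)^2 * (c * t^((k+2*j)+2))
        = c * ((((k+2*j)+2:ℕ):ℝ)^2 - (k:ℝ)^2) * (t^(k+2*j) - t^((k+2*j)+2)) :=
          term_general s t c hs ht hst k (k+2*j)
      _ = c * (4*((j+1:ℕ):ℝ)*(((j+1:ℕ):ℝ)+(k:ℝ))) * (t^(k+2*j) - t^((k+2*j)+2)) := by
          push_cast; ring

private lemma ode_calc (k n : ℕ) (c : ℕ → ℝ)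
    (hrec : ∀ j, j < n → c (j+1) * ((j+1:ℝ) * ((j:ℝ)+1+k))
      = ((j:ℝ)*((j:ℝ)+k) - (n:ℝ)*((n:ℝ)+k)) * c j)
    (x : ℝ) (hx : x ∈ Set.Ioo 0 (Real.pi/2)) :
    deriv (deriv (fun y => ∑ l ∈ Finset.range (n+1), c l * Real.cos y ^ (k+2*l))) x
      - deriv (fun y => ∑ l ∈ Finset.range (n+1), c l * Real.cos y ^ (k+2*l)) x
          / (Real.sin x * Real.cos x)
      - (k:ℝ)^2 * Real.tan x ^2 * (∑ l ∈ Finset.range (n+1), c l * Real.cos x ^ (k+2*l))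
    = -(4*n*((n:ℝ)+k)) * ∑ l ∈ Finset.range (n+1), c l * Real.cos x ^ (k+2*l) := by
  obtain ⟨hx0, hx2⟩ := hx
  have hsin : 0 < Real.sin x :=
    Real.sin_pos_of_pos_of_lt_pi hx0 (by nlinarith [Real.pi_pos])
  have hcos : 0 < Real.cos x :=
    Real.cos_pos_of_mem_Ioo ⟨by nlinarith [Real.pi_pos], hx2⟩
  -- first derivative
  have hder1 : ∀ y : ℝ, HasDerivAt (fun y => ∑ l ∈ Finset.range (n+1), c l * Real.cos y ^ (k+2*l))
      (∑ l ∈ Finset.range (n+1),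
        (c l * ((k+2*l : ℕ) : ℝ)) * (Real.cos y ^ (k+2*l-1) * (-Real.sin y))) y := by
    intro y
    apply HasDerivAt.fun_sum
    intro l _
    have h := ((Real.hasDerivAt_cos y).fun_pow (k+2*l)).const_mul (c l)
    exact h.congr_deriv (by ring)
  have hderivF : deriv (fun y => ∑ l ∈ Finset.range (n+1), c l * Real.cos y ^ (k+2*l))
      = fun y => ∑ l ∈ Finset.range (n+1),
        (c l * ((k+2*l : ℕ) : ℝ)) * (Real.cos y ^ (k+2*l-1) * (-Real.sin y)) :=
    funext fun y => (hder1 y).deriv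
  -- second derivative
  have hder2 : HasDerivAt (fun y => ∑ l ∈ Finset.range (n+1),
        (c l * ((k+2*l : ℕ) : ℝ)) * (Real.cos y ^ (k+2*l-1) * (-Real.sin y)))
      (∑ l ∈ Finset.range (n+1),
        (c l * ((k+2*l : ℕ) : ℝ)) * ((((k+2*l-1 : ℕ) : ℝ) * Real.cos x ^ (k+2*l-1-1)
            * (-Real.sin x)) * (-Real.sin x) + Real.cos x ^ (k+2*l-1) * (-Real.cos x))) x := by
    apply HasDerivAt.fun_sum
    intro l _
    exact (((Real.hasDerivAt_cos x).fun_pow (k+2*l-1)).mul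
      ((Real.hasDerivAt_sin x).neg)).const_mul (c l * ((k+2*l : ℕ) : ℝ))
  have hd2 : deriv (deriv (fun y => ∑ l ∈ Finset.range (n+1), c l * Real.cos y ^ (k+2*l))) x
      = ∑ l ∈ Finset.range (n+1),
        (c l * ((k+2*l : ℕ) : ℝ)) * ((((k+2*l-1 : ℕ) : ℝ) * Real.cos x ^ (k+2*l-1-1)
            * (-Real.sin x)) * (-Real.sin x) + Real.cos x ^ (k+2*l-1) * (-Real.cos x)) := by
    rw [hderivF]
    exact hder2.deriv
  rw [hd2, hderivF, Real.tan_eq_sin_div_cos]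
  set s := Real.sin x with hsdef
  set t := Real.cos x with htdef
  have hst : s^2 + t^2 = 1 := Real.sin_sq_add_cos_sq x
  have hs0 : s ≠ 0 := ne_of_gt hsin
  have ht0 : t ≠ 0 := ne_of_gt hcos
  calc (∑ l ∈ Finset.range (n+1),
        (c l * ((k+2*l : ℕ) : ℝ)) * ((((k+2*l-1 : ℕ) : ℝ) * t ^ (k+2*l-1-1)
            * (-s)) * (-s) + t ^ (k+2*l-1) * (-t)))
      - (∑ l ∈ Finset.range (n+1), (c l * ((k+2*l : ℕ) : ℝ)) * (t ^ (k+2*l-1) * (-s))) / (s*t)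
      - (k:ℝ)^2 * (s/t)^2 * (∑ l ∈ Finset.range (n+1), c l * t ^ (k+2*l))
      = ∑ l ∈ Finset.range (n+1),
          ((c l * ((k+2*l : ℕ) : ℝ)) * ((((k+2*l-1 : ℕ) : ℝ) * t ^ (k+2*l-1-1)
              * (-s)) * (-s) + t ^ (k+2*l-1) * (-t))
            - ((c l * ((k+2*l : ℕ) : ℝ)) * (t ^ (k+2*l-1) * (-s))) / (s*t)
            - (k:ℝ)^2 * (s/t)^2 * (c l * t ^ (k+2*l))) := by
        rw [Finset.sum_div, Finset.mul_sum, ← Finset.sum_sub_distrib, ← Finset.sum_sub_distrib]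
    _ = ∑ l ∈ Finset.range (n+1),
          c l * (4*(l:ℝ)*((l:ℝ)+(k:ℝ))) * (t^(k+2*l-1-1) - t^(k+2*l)) :=
        Finset.sum_congr rfl fun l _ => term_lemma s t (c l) hs0 ht0 hst k l
    _ = ∑ j ∈ Finset.range n,
          c (j+1) * (4*((j+1:ℕ):ℝ)*(((j+1:ℕ):ℝ)+(k:ℝ))) * (t^(k+2*(j+1)-1-1) - t^(k+2*(j+1)))
        + c 0 * (4*((0:ℕ):ℝ)*(((0:ℕ):ℝ)+(k:ℝ))) * (t^(k+2*0-1-1) - t^(k+2*0)) :=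
        Finset.sum_range_succ' _ n
    _ = ∑ j ∈ Finset.range n,
          (4*((j:ℝ)*((j:ℝ)+(k:ℝ)) - (n:ℝ)*((n:ℝ)+(k:ℝ))) * (c j * t^(k+2*j))
            - c (j+1) * (4*((j+1:ℕ):ℝ)*(((j+1:ℕ):ℝ)+(k:ℝ))) * t^(k+2*(j+1))) := by
        rw [Nat.cast_zero, mul_zero, zero_mul, mul_zero, zero_mul, add_zero]
        apply Finset.sum_congr rfl
        intro j hj
        have hj' : j < n := Finset.mem_range.mp hj
        have e3 : k+2*(j+1)-1-1 = k+2*j := by omega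
        rw [e3]
        have hr := hrec j hj'
        push_cast
        linear_combination (4 * t^(k+2*j)) * hr
    _ = ∑ j ∈ Finset.range n,
          4*((j:ℝ)*((j:ℝ)+(k:ℝ)) - (n:ℝ)*((n:ℝ)+(k:ℝ))) * (c j * t^(k+2*j))
        - ∑ j ∈ Finset.range n,
          c (j+1) * (4*((j+1:ℕ):ℝ)*(((j+1:ℕ):ℝ)+(k:ℝ))) * t^(k+2*(j+1)) :=
        Finset.sum_sub_distrib _ _
    _ = ∑ j ∈ Finset.range n,
          4*((j:ℝ)*((j:ℝ)+(k:ℝ)) - (n:ℝ)*((n:ℝ)+(k:ℝ))) * (c j * t^(k+2*j))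
        - ∑ l ∈ Finset.range (n+1), c l * (4*(l:ℝ)*((l:ℝ)+(k:ℝ))) * t^(k+2*l) := by
        congr 1
        rw [Finset.sum_range_succ' (fun l => c l * (4*(l:ℝ)*((l:ℝ)+(k:ℝ))) * t^(k+2*l)) n]
        push_cast
        ring
    _ = ∑ j ∈ Finset.range n,
          4*((j:ℝ)*((j:ℝ)+(k:ℝ)) - (n:ℝ)*((n:ℝ)+(k:ℝ))) * (c j * t^(k+2*j))
        - (∑ l ∈ Finset.range n, c l * (4*(l:ℝ)*((l:ℝ)+(k:ℝ))) * t^(k+2*l)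
            + c n * (4*(n:ℝ)*((n:ℝ)+(k:ℝ))) * t^(k+2*n)) := by
        rw [Finset.sum_range_succ]
    _ = ∑ j ∈ Finset.range n, -(4*(n:ℝ)*((n:ℝ)+(k:ℝ))) * (c j * t^(k+2*j))
        - (4*(n:ℝ)*((n:ℝ)+(k:ℝ))) * (c n * t^(k+2*n)) := by
        rw [sub_add_eq_sub_sub, ← Finset.sum_sub_distrib]
        rw [Finset.sum_congr rfl (fun j _ => by ring :
          ∀ j ∈ Finset.range n, 4*((j:ℝ)*((j:ℝ)+(k:ℝ)) - (n:ℝ)*((n:ℝ)+(k:ℝ))) * (c j * t^(k+2*j))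
            - c j * (4*(j:ℝ)*((j:ℝ)+(k:ℝ))) * t^(k+2*j)
            = -(4*(n:ℝ)*((n:ℝ)+(k:ℝ))) * (c j * t^(k+2*j)))]
        ring
    _ = -(4*(n:ℝ)*((n:ℝ)+(k:ℝ))) * ∑ l ∈ Finset.range (n+1), c l * t^(k+2*l) := by
        rw [Finset.sum_range_succ (fun l => c l * t^(k+2*l)) n,
          mul_add (-(4*(n:ℝ)*((n:ℝ)+(k:ℝ)))), Finset.mul_sum]
        ring
    _ = -(4*n*((n:ℝ)+k)) * ∑ l ∈ Finset.range (n+1), c l * t ^ (k+2*l) := by push_cast; ring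

private lemma int_calc (k n : ℕ) (c : ℕ → ℝ) (h0 : ∑ l ∈ Finset.range (n+1), c l = 0) :
    MeasureTheory.IntegrableOn
      (fun x : ℝ => (∑ l ∈ Finset.range (n+1), c l * Real.cos x ^ (k+2*l))^2 / Real.tan x)
      (Set.Ioo 0 (Real.pi/2)) := by
  set F : ℝ → ℝ := fun x => ∑ l ∈ Finset.range (n+1), c l * Real.cos x ^ (k+2*l) with hF
  set M : ℝ := ∑ l ∈ Finset.range (n+1), |c l| * l with hM
  have hM0 : 0 ≤ M := Finset.sum_nonneg fun l _ => by positivity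
  -- bound |F x| ≤ M * sin x ^ 2 for x with 0 ≤ cos x ≤ 1
  have hbound : ∀ x : ℝ, 0 ≤ Real.cos x → Real.cos x ≤ 1 → |F x| ≤ M * Real.sin x ^ 2 := by
    intro x hc0 hc1
    have hFx : F x = ∑ l ∈ Finset.range (n+1), c l * (Real.cos x ^ (k+2*l) - Real.cos x ^ k) := by
      rw [hF]
      rw [Finset.sum_congr rfl (fun l _ => by ring :
        ∀ l ∈ Finset.range (n+1), c l * (Real.cos x ^ (k+2*l) - Real.cos x ^ k)
          = c l * Real.cos x ^ (k+2*l) - c l * Real.cos x ^ k)]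
      rw [Finset.sum_sub_distrib, ← Finset.sum_mul, h0]
      ring
    rw [hFx]
    refine le_trans (Finset.abs_sum_le_sum_abs _ _) ?_
    rw [hM, Finset.sum_mul]
    apply Finset.sum_le_sum
    intro l _
    rw [abs_mul]
    have hterm : |Real.cos x ^ (k+2*l) - Real.cos x ^ k| ≤ (l : ℝ) * Real.sin x ^ 2 := by
      have hpow : Real.cos x ^ (k+2*l) = Real.cos x ^ k * (Real.cos x ^ 2) ^ l := by
        rw [← pow_mul, ← pow_add]
      have hck : Real.cos x ^ k ≤ 1 := pow_le_one₀ hc0 hc1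
      have hck0 : 0 ≤ Real.cos x ^ k := pow_nonneg hc0 k
      have hc2 : (Real.cos x ^ 2) ^ l ≤ 1 := pow_le_one₀ (by positivity) (by nlinarith)
      have hbern : 1 + (l : ℝ) * (Real.cos x ^ 2 - 1) ≤ (Real.cos x ^ 2) ^ l := by
        have := one_add_mul_le_pow (a := Real.cos x ^ 2 - 1) (by nlinarith) l
        calc 1 + (l:ℝ) * (Real.cos x ^2 - 1) ≤ (1 + (Real.cos x ^2 - 1))^l := this
          _ = (Real.cos x ^ 2)^l := by ring_nf
      have hsin2 : Real.sin x ^ 2 = 1 - Real.cos x ^ 2 := by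
        have := Real.sin_sq_add_cos_sq x; linarith
      rw [hpow, abs_of_nonpos (by nlinarith), hsin2]
      have h1 : Real.cos x ^ k * (1 - (Real.cos x ^2)^l) ≤ 1 - (Real.cos x^2)^l := by
        nlinarith
      nlinarith
    calc |c l| * |Real.cos x ^ (k+2*l) - Real.cos x ^ k| ≤ |c l| * ((l:ℝ) * Real.sin x ^2) :=
          mul_le_mul_of_nonneg_left hterm (abs_nonneg _)
      _ = |c l| * l * Real.sin x ^ 2 := by ring
  -- measurability
  have hFc : Continuous F := by
    rw [hF]
    exact continuous_finset_sum _ fun l _ => continuous_const.mul (Real.continuous_cos.pow _)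
  have htan : Measurable Real.tan := by
    have : Real.tan = fun x => Real.sin x / Real.cos x := funext Real.tan_eq_sin_div_cos
    rw [this]
    exact Real.continuous_sin.measurable.div Real.continuous_cos.measurable
  have hmeas : MeasureTheory.AEStronglyMeasurable (fun x : ℝ => (F x)^2 / Real.tan x)
      MeasureTheory.volume :=
    (((hFc.measurable.pow_const 2)).div htan).aestronglyMeasurable
  refine MeasureTheory.Measure.integrableOn_of_bounded (μ := MeasureTheory.volume)
    (measure_Ioo_lt_top).ne hmeas (M := M^2) ?_
  · rw [MeasureTheory.ae_restrict_iff' measurableSet_Ioo]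
    refine MeasureTheory.ae_of_all _ ?_
    intro x hx
    obtain ⟨hx0, hx2⟩ := hx
    have hpi := Real.pi_pos
    have hsin : 0 < Real.sin x := Real.sin_pos_of_pos_of_lt_pi hx0 (by nlinarith)
    have hcos : 0 < Real.cos x := Real.cos_pos_of_mem_Ioo ⟨by nlinarith, hx2⟩
    have hs1 : Real.sin x ≤ 1 := Real.sin_le_one x
    have hc1 : Real.cos x ≤ 1 := Real.cos_le_one x
    have hb := hbound x hcos.le hc1
    rw [Real.norm_eq_abs, Real.tan_eq_sin_div_cos, div_div_eq_mul_div, abs_of_nonneg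
      (by positivity)]
    rw [div_le_iff₀ hsin]
    have hF2 : F x ^ 2 ≤ (M * Real.sin x ^ 2)^2 := by
      rw [← sq_abs (F x)]
      exact pow_le_pow_left₀ (abs_nonneg _) hb 2
    have h5 : Real.sin x^3 * Real.cos x ≤ 1 :=
      mul_le_one₀ (pow_le_one₀ hsin.le hs1) hcos.le hc1
    show F x ^ 2 * Real.cos x ≤ M^2 * Real.sin x
    calc F x^2 * Real.cos x ≤ (M*Real.sin x^2)^2 * Real.cos x :=
          mul_le_mul_of_nonneg_right hF2 hcos.le
      _ = M^2 * Real.sin x * (Real.sin x^3 * Real.cos x) := by ring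
      _ ≤ M^2 * Real.sin x * 1 :=
          mul_le_mul_of_nonneg_left h5 (mul_nonneg (sq_nonneg M) hsin.le)
      _ = M^2 * Real.sin x := mul_one _

/-- Grushin sphere eigenfunctions: the terminating hypergeometric function
`u(x) = cos(x)^k · F(−n, n+k; k+1; cos²x)`, written as an explicit finite sum,
satisfies `u'' − u'/(sin x cos x) − k² tan²x · u = −4n(n+k)·u` on `(0, π/2)`
and is square-integrable for the measure `dx / tan x`. -/
theorem grushin_sphere_eigenfunction (k : ℕ) (n : ℕ) (hn : 0 < n)
    (u : ℝ → ℝ)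
    (hu : ∀ x : ℝ, u x = ∑ l ∈ Finset.range (n + 1),
      (-1 : ℝ) ^ l * (n.choose l) *
        (∏ i ∈ Finset.range l, ((n : ℝ) + k + i)) /
        (∏ i ∈ Finset.range l, ((k : ℝ) + 1 + i)) *
        Real.cos x ^ (k + 2 * l)) :
    (∀ x : ℝ, x ∈ Set.Ioo 0 (Real.pi / 2) →
      deriv (deriv u) x - deriv u x / (Real.sin x * Real.cos x)
        - (k : ℝ) ^ 2 * Real.tan x ^ 2 * u x
        = -(4 * n * ((n : ℝ) + k)) * u x) ∧
    IntegrableOn (fun x : ℝ => (u x) ^ 2 / Real.tan x)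
      (Set.Ioo 0 (Real.pi / 2)) := by
  set c : ℕ → ℝ := fun l => (-1 : ℝ) ^ l * (n.choose l) *
        (∏ i ∈ Finset.range l, ((n : ℝ) + k + i)) /
        (∏ i ∈ Finset.range l, ((k : ℝ) + 1 + i)) with hc
  have hU : u = fun y => ∑ l ∈ Finset.range (n+1), c l * Real.cos y ^ (k + 2*l) :=
    funext fun y => hu y
  have hrec : ∀ j, j < n → c (j+1) * ((j+1:ℝ) * ((j:ℝ)+1+k))
      = ((j:ℝ)*((j:ℝ)+k) - (n:ℝ)*((n:ℝ)+k)) * c j := fun j hj => cc_rec k n j hj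
  have h0 : ∑ l ∈ Finset.range (n+1), c l = 0 := sum_c_eq_zero k n hn
  constructor
  · intro x hx
    rw [hU]
    exact ode_calc k n c hrec x hx
  · rw [hU]
    exact int_calc k n c h0
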